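/- Let M, m, n be integers with 1 ≤ m < n ≤ M, let a_n² ∈ (0, 1/2] with a_m² = 1 − a_n², let R > 0, and let G₁,…,G_M be i.i.d. exponential(1) channel gains with order statistics G_(1) ≤ ⋯ ≤ G_(M); write X = G_(m), Y = G_(n), and define the rates R_m = log₂(1 + X a_m²/(X a_n² + 1/ρ)), R_n = log₂(1 + ρ a_n² Y), R̄_m = (1/2)log₂(1 + ρX), R̄_n = (1/2)log₂(1 + ρY). Then lim_{ρ→∞} P(R_m + R_n − R̄_m − R̄_n < R) = P(Y < 2^{2R}·X); in particular, for R > 0 the probability that the F-NOMA sum-rate gain over orthogonal MA is below R does not vanish as ρ → ∞ but converges to a strictly positive constant depending only on M, m, n, R. -/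

import Mathlib

open MeasureTheory ProbabilityTheory Filter

/-- The `k`-th smallest entry (1-indexed) of a finite tuple of reals. -/
noncomputable def orderStat {M : ℕ} (g : Fin M → ℝ) (k : ℕ) : ℝ :=
  ((List.ofFn g).insertionSort (· ≤ ·)).getD (k - 1) 0

/-! ### Auxiliary lemmas on order statistics -/

section OS
variable {M : ℕ} (g : Fin M → ℝ)

lemma sortedList_length : ((List.ofFn g).insertionSort (· ≤ ·)).length = M := by
  rw [List.length_insertionSort, List.length_ofFn]

lemma sortedList_sorted : ((List.ofFn g).insertionSort (· ≤ ·)).Pairwise (· ≤ ·) :=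
  List.pairwise_insertionSort _ _

lemma sortedList_perm : ((List.ofFn g).insertionSort (· ≤ ·)).Perm (List.ofFn g) :=
  List.perm_insertionSort _ _

lemma orderStat_eq_get {k : ℕ} (hk1 : 1 ≤ k) (hkM : k ≤ M) :
    orderStat g k = ((List.ofFn g).insertionSort (· ≤ ·)).get
      ⟨k - 1, by rw [sortedList_length]; omega⟩ := by
  rw [orderStat, List.getD_eq_getElem _ _ (by rw [sortedList_length]; omega)]
  rfl

lemma orderStat_mem {k : ℕ} (hk1 : 1 ≤ k) (hkM : k ≤ M) :
    ∃ i, g i = orderStat g k := by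
  rw [orderStat_eq_get g hk1 hkM]
  have hmem : ((List.ofFn g).insertionSort (· ≤ ·)).get
      ⟨k - 1, by rw [sortedList_length]; omega⟩ ∈ (List.ofFn g).insertionSort (· ≤ ·) :=
    List.get_mem _ _
  rw [(sortedList_perm g).mem_iff, List.mem_ofFn] at hmem
  exact hmem

lemma orderStat_mono {j k : ℕ} (hj : 1 ≤ j) (hjk : j ≤ k) (hkM : k ≤ M) :
    orderStat g j ≤ orderStat g k := by
  rw [orderStat_eq_get g hj (hjk.trans hkM), orderStat_eq_get g (hj.trans hjk) hkM]
  exact (sortedList_sorted g).rel_get_of_le (by simp; omega)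

end OS

lemma filter_length_sum {α : Type*} (l : List α) (q : α → Bool) :
    (l.filter q).length = (l.map (fun i => if q i then 1 else 0)).sum := by
  induction l with
  | nil => simp
  | cons a t ih =>
    by_cases h : q a <;> simp [List.filter_cons, h, ih, Nat.add_comm]

lemma countP_ofFn {M : ℕ} (g : Fin M → ℝ) (p : ℝ → Bool) :
    (List.ofFn g).countP p = (Finset.univ.filter (fun i => p (g i))).card := by
  rw [List.ofFn_eq_map, List.countP_map, List.countP_eq_length_filter, Finset.card_filter,
    filter_length_sum, Fin.sum_univ_def]
  simp [Function.comp]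

section CNT
variable {M : ℕ} (g : Fin M → ℝ) {k : ℕ}

lemma card_le_of_orderStat (hk1 : 1 ≤ k) (hkM : k ≤ M) :
    k ≤ (Finset.univ.filter (fun i => g i ≤ orderStat g k)).card := by
  classical
  set l := (List.ofFn g).insertionSort (· ≤ ·) with hl
  have hlen : l.length = M := by rw [hl, List.length_insertionSort, List.length_ofFn]
  have hsort : l.Pairwise (· ≤ ·) := List.pairwise_insertionSort _ _
  set v := orderStat g k with hv
  have hvget : v = l.get ⟨k - 1, by omega⟩ := by
    rw [hv, orderStat, List.getD_eq_getElem _ _ (by rw [← hl]; omega)]; rfl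
  have key : k ≤ l.countP (fun x => decide (x ≤ v)) := by
    have h1 : (l.take k).countP (fun x => decide (x ≤ v)) ≤ l.countP (fun x => decide (x ≤ v)) :=
      (List.take_sublist k l).countP_le
    have h2 : (l.take k).countP (fun x => decide (x ≤ v)) = (l.take k).length := by
      rw [List.countP_eq_length]
      intro a ha
      rw [List.mem_iff_getElem] at ha
      obtain ⟨i, hi, rfl⟩ := ha
      simp only [List.length_take] at hi
      rw [List.getElem_take]
      simp only [decide_eq_true_eq, hvget]
      exact hsort.rel_get_of_le (by simp; omega)
    rw [h2, List.length_take] at h1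
    omega
  have hperm : l.Perm (List.ofFn g) := List.perm_insertionSort _ _
  rw [hperm.countP_eq] at key
  calc k ≤ _ := key
    _ = _ := by
        rw [countP_ofFn]
        congr 1
        ext i
        simp

lemma card_lt_orderStat_le (hk1 : 1 ≤ k) (hkM : k ≤ M) :
    (Finset.univ.filter (fun i => g i < orderStat g k)).card ≤ k - 1 := by
  classical
  set l := (List.ofFn g).insertionSort (· ≤ ·) with hl
  have hlen : l.length = M := by rw [hl, List.length_insertionSort, List.length_ofFn]
  have hsort : l.Pairwise (· ≤ ·) := List.pairwise_insertionSort _ _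
  set v := orderStat g k with hv
  have hvget : v = l.get ⟨k - 1, by omega⟩ := by
    rw [hv, orderStat, List.getD_eq_getElem _ _ (by rw [← hl]; omega)]; rfl
  have key : l.countP (fun x => decide (x < v)) ≤ k - 1 := by
    have hsplit : l = l.take (k-1) ++ l.drop (k-1) := (List.take_append_drop _ _).symm
    have h0 : (l.drop (k-1)).countP (fun x => decide (x < v)) = 0 := by
      rw [List.countP_eq_zero]
      intro a ha
      rw [List.mem_iff_getElem] at ha
      obtain ⟨i, hi, rfl⟩ := ha
      simp only [List.length_drop] at hi
      rw [List.getElem_drop]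
      simp only [decide_eq_true_eq, not_lt, hvget]
      exact hsort.rel_get_of_le (by simp)
    calc l.countP (fun x => decide (x < v))
        = (l.take (k-1)).countP _ + (l.drop (k-1)).countP _ := by
          conv_lhs => rw [hsplit]
          rw [List.countP_append]
      _ ≤ (l.take (k-1)).length + 0 := by
          rw [h0]; exact Nat.add_le_add List.countP_le_length le_rfl
      _ ≤ k - 1 := by rw [List.length_take]; omega
  have hperm : l.Perm (List.ofFn g) := List.perm_insertionSort _ _
  rw [hperm.countP_eq, countP_ofFn] at key
  calc (Finset.univ.filter (fun i => g i < v)).card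
      = _ := by congr 1; ext i; simp
    _ ≤ k - 1 := key

lemma orderStat_le_iff (hk1 : 1 ≤ k) (hkM : k ≤ M) (t : ℝ) :
    orderStat g k ≤ t ↔ k ≤ (Finset.univ.filter (fun i => g i ≤ t)).card := by
  classical
  constructor
  · intro h
    refine (card_le_of_orderStat g hk1 hkM).trans (Finset.card_le_card ?_)
    intro i hi
    simp only [Finset.mem_filter] at *
    exact ⟨hi.1, hi.2.trans h⟩
  · intro h
    by_contra hlt
    push_neg at hlt
    have hsub : (Finset.univ.filter (fun i => g i ≤ t)) ⊆
        (Finset.univ.filter (fun i => g i < orderStat g k)) := by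
      intro i hi
      simp only [Finset.mem_filter] at *
      exact ⟨hi.1, lt_of_le_of_lt hi.2 hlt⟩
    have := (Finset.card_le_card hsub).trans (card_lt_orderStat_le g hk1 hkM)
    omega

end CNT

lemma measurable_orderStat_comp {Ω : Type*} [MeasurableSpace Ω] {M : ℕ}
    (G : Fin M → Ω → ℝ) (hG : ∀ i, Measurable (G i)) {k : ℕ} (hk1 : 1 ≤ k) (hkM : k ≤ M) :
    Measurable (fun ω => orderStat (fun i => G i ω) k) := by
  classical
  apply measurable_of_Iic
  intro t
  have hset : (fun ω => orderStat (fun i => G i ω) k) ⁻¹' Set.Iic t =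
      ⋃ (S : Finset (Fin M)) (_ : S.card = k), ⋂ i ∈ S, (G i) ⁻¹' Set.Iic t := by
    ext ω
    simp only [Set.mem_preimage, Set.mem_Iic, Set.mem_iUnion, Set.mem_iInter]
    rw [orderStat_le_iff _ hk1 hkM]
    constructor
    · intro h
      obtain ⟨S, hS, hcard⟩ := Finset.exists_subset_card_eq h
      refine ⟨S, hcard, fun i hi => ?_⟩
      have := hS hi
      simp only [Finset.mem_filter] at this
      exact this.2
    · rintro ⟨S, hcard, hall⟩
      calc k = S.card := hcard.symm
        _ ≤ _ := Finset.card_le_card (fun i hi => by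
            simp only [Finset.mem_filter]
            exact ⟨Finset.mem_univ i, hall i hi⟩)
  rw [hset]
  exact MeasurableSet.iUnion fun S => MeasurableSet.iUnion fun _ =>
    MeasurableSet.biInter (S : Set (Fin M)).to_countable
      (fun i _ => (hG i) measurableSet_Iic)

/-! ### Auxiliary lemmas on the exponential measure -/

lemma expMeasure_Iic_zero : expMeasure 1 (Set.Iic 0) = 0 := by
  rw [expMeasure, gammaMeasure, withDensity_apply _ measurableSet_Iic]
  rw [Measure.restrict_congr_set Iio_ae_eq_Iic.symm]
  exact lintegral_gammaPDF_of_nonpos le_rfl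

lemma expMeasure_singleton (x : ℝ) : expMeasure 1 {x} = 0 := by
  rw [expMeasure, gammaMeasure]
  exact (withDensity_absolutelyContinuous _ _) (measure_singleton x)

lemma expMeasure_Ioo_ne_zero {c : ℝ} (hc : 1 < c) : expMeasure 1 (Set.Ioo 1 c) ≠ 0 := by
  rw [expMeasure, gammaMeasure]
  have hmeas : Measurable (gammaPDF 1 1) := (measurable_gammaPDFReal 1 1).ennreal_ofReal
  rw [Ne, withDensity_apply_eq_zero hmeas]
  intro h
  have hsub : Set.Ioo (1:ℝ) c ⊆ {x | gammaPDF 1 1 x ≠ 0} ∩ Set.Ioo 1 c := by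
    intro x hx
    refine ⟨?_, hx⟩
    simp only [Set.mem_setOf_eq, gammaPDF, ne_eq, ENNReal.ofReal_eq_zero, not_le]
    exact gammaPDFReal_pos zero_lt_one zero_lt_one (lt_trans zero_lt_one hx.1)
  have := measure_mono_null hsub h
  rw [Real.volume_Ioo] at this
  simp only [ENNReal.ofReal_eq_zero] at this
  linarith

instance : IsProbabilityMeasure (expMeasure 1) := isProbabilityMeasure_expMeasure zero_lt_one

lemma indep_eq_mul_null {Ω : Type*} [MeasureSpace Ω] [IsProbabilityMeasure (ℙ : Measure Ω)]
    {f g : Ω → ℝ} (hf : Measurable f) (hg : Measurable g)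
    (hind : IndepFun f g ℙ) (hfd : Measure.map f ℙ = expMeasure 1)
    (hgd : Measure.map g ℙ = expMeasure 1) {c : ℝ} (hc : c ≠ 0) :
    ℙ {ω | f ω = c * g ω} = 0 := by
  have hmap : Measure.map (fun ω => (f ω, g ω)) ℙ =
      (expMeasure 1).prod (expMeasure 1) := by
    rw [(indepFun_iff_map_prod_eq_prod_map_map hf.aemeasurable hg.aemeasurable).mp hind,
      hfd, hgd]
  have hs : MeasurableSet {p : ℝ × ℝ | p.1 = c * p.2} :=
    measurableSet_eq_fun measurable_fst (measurable_snd.const_mul c)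
  have : ℙ {ω | f ω = c * g ω} =
      (Measure.map (fun ω => (f ω, g ω)) ℙ) {p : ℝ × ℝ | p.1 = c * p.2} := by
    rw [Measure.map_apply (hf.prodMk hg) hs]
    rfl
  rw [this, hmap, Measure.prod_apply hs]
  have hfib : ∀ x : ℝ, (Prod.mk x ⁻¹' {p : ℝ × ℝ | p.1 = c * p.2}) = {x / c} := by
    intro x
    ext y
    simp only [Set.mem_preimage, Set.mem_setOf_eq, Set.mem_singleton_iff]
    rw [eq_comm, eq_div_iff hc, mul_comm]
  simp only [hfib, expMeasure_singleton]
  simp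

/-! ### Analytic lemmas -/

lemma tendsto_gap {a X Y : ℝ} (ha : 0 < a) (hX : 0 < X) (hXY : X ≤ Y) :
    Tendsto (fun ρ : ℝ =>
      Real.logb 2 (1 + X * (1 - a) / (X * a + 1 / ρ)) +
        Real.logb 2 (1 + ρ * a * Y) -
        (1 / 2) * Real.logb 2 (1 + ρ * X) -
        (1 / 2) * Real.logb 2 (1 + ρ * Y))
      atTop (nhds ((1 / 2) * Real.logb 2 (Y / X))) := by
  have hY : 0 < Y := lt_of_lt_of_le hX hXY
  have haY : 0 < a * Y := mul_pos ha hY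
  have hXa : 0 < X * a := mul_pos hX ha
  set h : ℝ → ℝ := fun ρ =>
    Real.logb 2 (1 + X * (1 - a) / (X * a + ρ⁻¹)) +
      Real.logb 2 (ρ⁻¹ + a * Y) -
      (1 / 2) * Real.logb 2 (ρ⁻¹ + X) -
      (1 / 2) * Real.logb 2 (ρ⁻¹ + Y) with hh
  have hinv : Tendsto (fun ρ : ℝ => ρ⁻¹) atTop (nhds 0) := tendsto_inv_atTop_zero
  have hlogb : ∀ {u : ℝ → ℝ} {L : ℝ}, 0 < L → Tendsto u atTop (nhds L) →
      Tendsto (fun ρ => Real.logb 2 (u ρ)) atTop (nhds (Real.logb 2 L)) := by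
    intro u L hL hu
    have : Tendsto (fun ρ => Real.log (u ρ)) atTop (nhds (Real.log L)) :=
      (Real.continuousAt_log hL.ne').tendsto.comp hu
    simpa [Real.logb] using this.div_const (Real.log 2)
  have h1 : Tendsto (fun ρ : ℝ => 1 + X * (1 - a) / (X * a + ρ⁻¹)) atTop
      (nhds (1 + X * (1 - a) / (X * a))) := by
    have : Tendsto (fun ρ : ℝ => X * a + ρ⁻¹) atTop (nhds (X * a)) := by
      simpa using (tendsto_const_nhds.add hinv)
    exact tendsto_const_nhds.add (tendsto_const_nhds.div this hXa.ne')
  have hval1 : 1 + X * (1 - a) / (X * a) = a⁻¹ := by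
    rw [mul_div_mul_left _ _ hX.ne']
    field_simp
    ring
  have h2 : Tendsto (fun ρ : ℝ => ρ⁻¹ + a * Y) atTop (nhds (a * Y)) := by
    simpa using hinv.add (tendsto_const_nhds : Tendsto (fun _ : ℝ => a * Y) atTop _)
  have h3 : Tendsto (fun ρ : ℝ => ρ⁻¹ + X) atTop (nhds X) := by
    simpa using hinv.add (tendsto_const_nhds : Tendsto (fun _ : ℝ => X) atTop _)
  have h4 : Tendsto (fun ρ : ℝ => ρ⁻¹ + Y) atTop (nhds Y) := by
    simpa using hinv.add (tendsto_const_nhds : Tendsto (fun _ : ℝ => Y) atTop _)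
  have hpos1 : (0:ℝ) < 1 + X * (1 - a) / (X * a) := by rw [hval1]; positivity
  have hlim : Tendsto h atTop (nhds
      (Real.logb 2 (1 + X * (1 - a) / (X * a)) + Real.logb 2 (a * Y) -
        (1 / 2) * Real.logb 2 X - (1 / 2) * Real.logb 2 Y)) :=
    (((hlogb hpos1 h1).add (hlogb haY h2)).sub
      ((hlogb hX h3).const_mul (1 / 2))).sub ((hlogb hY h4).const_mul (1 / 2))
  have hvalue : Real.logb 2 (1 + X * (1 - a) / (X * a)) + Real.logb 2 (a * Y) -
      (1 / 2) * Real.logb 2 X - (1 / 2) * Real.logb 2 Y =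
      (1 / 2) * Real.logb 2 (Y / X) := by
    rw [hval1, Real.logb_inv, Real.logb_mul ha.ne' hY.ne', Real.logb_div hY.ne' hX.ne']
    ring
  rw [hvalue] at hlim
  refine hlim.congr' ?_
  filter_upwards [eventually_gt_atTop (0 : ℝ)] with ρ hρ
  have hρ' : ρ⁻¹ > 0 := inv_pos.mpr hρ
  have e1 : 1 + ρ * a * Y = ρ * (ρ⁻¹ + a * Y) := by field_simp
  have e2 : 1 + ρ * X = ρ * (ρ⁻¹ + X) := by field_simp
  have e3 : 1 + ρ * Y = ρ * (ρ⁻¹ + Y) := by field_simp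
  have l1 : Real.logb 2 (1 + ρ * a * Y) = Real.logb 2 ρ + Real.logb 2 (ρ⁻¹ + a * Y) := by
    rw [e1, Real.logb_mul hρ.ne' (by positivity)]
  have l2 : Real.logb 2 (1 + ρ * X) = Real.logb 2 ρ + Real.logb 2 (ρ⁻¹ + X) := by
    rw [e2, Real.logb_mul hρ.ne' (by positivity)]
  have l3 : Real.logb 2 (1 + ρ * Y) = Real.logb 2 ρ + Real.logb 2 (ρ⁻¹ + Y) := by
    rw [e3, Real.logb_mul hρ.ne' (by positivity)]
  rw [hh]
  simp only [one_div ρ]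
  rw [l1, l2, l3]
  ring

lemma gap_lt_iff {X Y R : ℝ} (hX : 0 < X) (hY : 0 < Y) :
    ((1 / 2) * Real.logb 2 (Y / X) < R ↔ Y < (2:ℝ) ^ (2 * R) * X) := by
  have : (1 / 2:ℝ) * Real.logb 2 (Y / X) < R ↔ Real.logb 2 (Y / X) < 2 * R := by
    constructor <;> intro <;> linarith
  rw [this, Real.logb_lt_iff_lt_rpow one_lt_two (div_pos hY hX), div_lt_iff₀ hX]

lemma gap_gt_iff {X Y R : ℝ} (hX : 0 < X) (hY : 0 < Y) :
    (R < (1 / 2) * Real.logb 2 (Y / X) ↔ (2:ℝ) ^ (2 * R) * X < Y) := by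
  have : R < (1 / 2:ℝ) * Real.logb 2 (Y / X) ↔ 2 * R < Real.logb 2 (Y / X) := by
    constructor <;> intro <;> linarith
  rw [this, Real.lt_logb_iff_rpow_lt one_lt_two (div_pos hY hX), lt_div_iff₀ hX]

/-- with `X, Y` the `m`-th and `n`-th order statistics of `M` i.i.d.
exponential(1) channel gains, `a_n² ∈ (0,1/2]`, `a_m² = 1−a_n²`, and `R > 0`,
`lim_{ρ→∞} P(R_m + R_n − R̄_m − R̄_n < R) = P(Y < 2^{2R}X)`, which is a strictly
positive constant (depending only on `M, m, n, R`), so the probability that the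
F-NOMA sum-rate gain is below `R` does not vanish as `ρ → ∞`. -/
theorem fnoma_sum_rate_gap_limit {Ω : Type*} [MeasureSpace Ω]
    [IsProbabilityMeasure (ℙ : Measure Ω)]
    (M m n : ℕ) (hm : 1 ≤ m) (hmn : m < n) (hnM : n ≤ M)
    (an2 : ℝ) (han2 : an2 ∈ Set.Ioc (0 : ℝ) (1 / 2)) (R : ℝ) (hR : 0 < R)
    (G : Fin M → Ω → ℝ) (hGmeas : ∀ i, Measurable (G i))
    (hindep : iIndepFun G ℙ)
    (hdist : ∀ i, Measure.map (G i) ℙ = expMeasure 1) :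
    Tendsto (fun ρ : ℝ =>
        (ℙ {ω |
          Real.logb 2 (1 + orderStat (fun i => G i ω) m * (1 - an2) /
              (orderStat (fun i => G i ω) m * an2 + 1 / ρ)) +
            Real.logb 2 (1 + ρ * an2 * orderStat (fun i => G i ω) n) -
            (1 / 2) * Real.logb 2 (1 + ρ * orderStat (fun i => G i ω) m) -
            (1 / 2) * Real.logb 2 (1 + ρ * orderStat (fun i => G i ω) n) < R}).toReal)
      atTop
      (nhds ((ℙ {ω | orderStat (fun i => G i ω) n <
        (2 : ℝ) ^ (2 * R) * orderStat (fun i => G i ω) m}).toReal)) ∧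
    0 < (ℙ {ω | orderStat (fun i => G i ω) n <
      (2 : ℝ) ^ (2 * R) * orderStat (fun i => G i ω) m}).toReal := by
  classical
  have hmM : m ≤ M := (le_of_lt hmn).trans hnM
  have hn1 : 1 ≤ n := hm.trans hmn.le
  set c : ℝ := (2 : ℝ) ^ (2 * R) with hc
  have hc1 : 1 < c := by
    rw [hc, Real.one_lt_rpow_iff_of_pos two_pos]
    exact Or.inl ⟨one_lt_two, by linarith⟩
  have hc0 : (0:ℝ) < c := lt_trans zero_lt_one hc1
  set Xf : Ω → ℝ := fun ω => orderStat (fun i => G i ω) m with hXf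
  set Yf : Ω → ℝ := fun ω => orderStat (fun i => G i ω) n with hYf
  have hXm : Measurable Xf := measurable_orderStat_comp G hGmeas hm hmM
  have hYm : Measurable Yf := measurable_orderStat_comp G hGmeas hn1 hnM
  -- a.e. positivity of all gains
  have hpos : ∀ᵐ ω ∂(ℙ : Measure Ω), ∀ i, 0 < G i ω := by
    rw [MeasureTheory.ae_all_iff]
    intro i
    have : ℙ {ω | ¬ 0 < G i ω} = 0 := by
      have : {ω | ¬ 0 < G i ω} = (G i) ⁻¹' Set.Iic 0 := by
        ext ω; simp [not_lt]
      rw [this, ← Measure.map_apply (hGmeas i) measurableSet_Iic, hdist i,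
        expMeasure_Iic_zero]
    exact this
  -- a.e. the boundary event does not occur
  have hne : ∀ᵐ ω ∂(ℙ : Measure Ω), (∀ i, 0 < G i ω) → Yf ω ≠ c * Xf ω := by
    have hnull : ℙ (⋃ (i : Fin M) (j : Fin M),
        {ω | i ≠ j ∧ G i ω = c * G j ω}) = 0 := by
      refine measure_iUnion_null fun i => measure_iUnion_null fun j => ?_
      by_cases hij : i = j
      · have : {ω | i ≠ j ∧ G i ω = c * G j ω} = ∅ := by
          ext ω; simp [hij]
        simp [this]
      · refine measure_mono_null (fun ω hω => hω.2) ?_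
        exact indep_eq_mul_null (hGmeas i) (hGmeas j)
          (hindep.indepFun hij) (hdist i) (hdist j) (ne_of_gt hc0)
    have hae := (measure_eq_zero_iff_ae_notMem.mp hnull)
    filter_upwards [hae] with ω hω hposω heq
    obtain ⟨i, hi⟩ := orderStat_mem (fun i => G i ω) hn1 hnM
    obtain ⟨j, hj⟩ := orderStat_mem (fun i => G i ω) hm hmM
    have hij : G i ω = c * G j ω := by rw [hi, hj]; exact heq
    by_cases hijeq : i = j
    · subst hijeq
      have hGi : 0 < G i ω := hposω i
      nlinarith
    · exact hω (Set.mem_iUnion.mpr ⟨i, Set.mem_iUnion.mpr ⟨j, ⟨hijeq, hij⟩⟩⟩)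
  -- the limit event
  set T : Set Ω := {ω | Yf ω < c * Xf ω} with hT
  have hTmeas : MeasurableSet T := measurableSet_lt hYm (hXm.const_mul c)
  -- measurability of the gap
  have hlogbmeas : ∀ {e : Ω → ℝ}, Measurable e → Measurable fun ω => Real.logb 2 (e ω) := by
    intro e he
    exact (Real.measurable_log.comp he).div_const _
  have hgapmeas : ∀ ρ : ℝ, Measurable (fun ω =>
      Real.logb 2 (1 + Xf ω * (1 - an2) / (Xf ω * an2 + 1 / ρ)) +
        Real.logb 2 (1 + ρ * an2 * Yf ω) -
        (1 / 2) * Real.logb 2 (1 + ρ * Xf ω) -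
        (1 / 2) * Real.logb 2 (1 + ρ * Yf ω)) := by
    intro ρ
    refine Measurable.sub (Measurable.sub (Measurable.add ?_ ?_) ?_) ?_
    · exact hlogbmeas (measurable_const.add
        (((hXm.mul_const _)).div ((hXm.mul_const _).add_const _)))
    · exact hlogbmeas (measurable_const.add ((hYm.const_mul _)))
    · exact (hlogbmeas (measurable_const.add (hXm.const_mul _))).const_mul _
    · exact (hlogbmeas (measurable_const.add (hYm.const_mul _))).const_mul _
  set A : ℝ → Set Ω := fun ρ => {ω |
      Real.logb 2 (1 + Xf ω * (1 - an2) / (Xf ω * an2 + 1 / ρ)) +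
        Real.logb 2 (1 + ρ * an2 * Yf ω) -
        (1 / 2) * Real.logb 2 (1 + ρ * Xf ω) -
        (1 / 2) * Real.logb 2 (1 + ρ * Yf ω) < R} with hA
  have hAmeas : ∀ ρ, MeasurableSet (A ρ) :=
    fun ρ => measurableSet_lt (hgapmeas ρ) measurable_const
  -- dominated convergence for the indicators
  have hmain : Tendsto (fun ρ : ℝ => (ℙ (A ρ)).toReal) atTop (nhds ((ℙ T).toReal)) := by
    have hdc : Tendsto (fun ρ : ℝ => ∫ ω, (A ρ).indicator (fun _ => (1:ℝ)) ω ∂ℙ) atTop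
        (nhds (∫ ω, T.indicator (fun _ => (1:ℝ)) ω ∂ℙ)) := by
      refine tendsto_integral_filter_of_dominated_convergence (fun _ => (1:ℝ))
        (Eventually.of_forall fun ρ =>
          ((measurable_const.indicator (hAmeas ρ)).aestronglyMeasurable)) ?_ ?_ ?_
      · refine Eventually.of_forall fun ρ => Eventually.of_forall fun ω => ?_
        by_cases hω : ω ∈ A ρ <;> simp [Set.indicator_apply, hω]
      · exact integrable_const _
      · filter_upwards [hpos, hne] with ω hposω hneω
        have hXpos : 0 < Xf ω := by
          obtain ⟨j, hj⟩ := orderStat_mem (fun i => G i ω) hm hmM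
          exact lt_of_lt_of_eq (hposω j) hj
        have hXY : Xf ω ≤ Yf ω := orderStat_mono (fun i => G i ω) hm hmn.le hnM
        have hYpos : 0 < Yf ω := lt_of_lt_of_le hXpos hXY
        have htend := tendsto_gap (a := an2) (X := Xf ω) (Y := Yf ω) han2.1 hXpos hXY
        have hTind : ∀ (S : Set Ω) (hω : ω ∈ S), S.indicator (fun _ => (1:ℝ)) ω = 1 :=
          fun S hω => Set.indicator_of_mem hω _
        have hTind' : ∀ (S : Set Ω) (hω : ω ∉ S), S.indicator (fun _ => (1:ℝ)) ω = 0 :=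
          fun S hω => Set.indicator_of_notMem hω _
        rcases lt_trichotomy (Yf ω) (c * Xf ω) with hlt | heq | hgt
        · have hLlt : (1 / 2) * Real.logb 2 (Yf ω / Xf ω) < R :=
            (gap_lt_iff hXpos hYpos).mpr hlt
          rw [hTind T hlt]
          refine Tendsto.congr' ?_ tendsto_const_nhds
          filter_upwards [htend.eventually_lt_const hLlt] with ρ hρ
          exact (hTind (A ρ) hρ).symm
        · exact absurd heq (hneω hposω)
        · have hLgt : R < (1 / 2) * Real.logb 2 (Yf ω / Xf ω) :=
            (gap_gt_iff hXpos hYpos).mpr hgt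
          rw [hTind' T (by exact not_lt.mpr (le_of_lt hgt))]
          refine Tendsto.congr' ?_ tendsto_const_nhds
          filter_upwards [htend.eventually_const_lt hLgt] with ρ hρ
          exact (hTind' (A ρ) (by exact not_lt.mpr (le_of_lt hρ))).symm
    have hre : (fun ρ : ℝ => ∫ ω, (A ρ).indicator (fun _ => (1:ℝ)) ω ∂ℙ)
        = fun ρ : ℝ => (ℙ (A ρ)).toReal := by
      funext ρ
      exact integral_indicator_one (hAmeas ρ)
    have hre2 : (∫ ω, T.indicator (fun _ => (1:ℝ)) ω ∂ℙ) = (ℙ T).toReal :=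
      integral_indicator_one hTmeas

    rw [hre, hre2] at hdc
    exact hdc
  constructor
  · exact hmain
  · -- positivity
    have hsub : (⋂ i, (G i) ⁻¹' Set.Ioo 1 c) ⊆ T := by
      intro ω hω
      simp only [Set.mem_iInter, Set.mem_preimage, Set.mem_Ioo] at hω
      have hX1 : 1 < Xf ω := by
        obtain ⟨j, hj⟩ := orderStat_mem (fun i => G i ω) hm hmM
        exact lt_of_lt_of_eq (hω j).1 hj
      have hYc : Yf ω < c := by
        obtain ⟨i, hi⟩ := orderStat_mem (fun i => G i ω) hn1 hnM
        exact lt_of_eq_of_lt hi.symm (hω i).2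
      have : c < c * Xf ω := by nlinarith
      exact lt_trans hYc this
    have hprod : ℙ (⋂ i, (G i) ⁻¹' Set.Ioo 1 c) =
        ∏ i : Fin M, ℙ ((G i) ⁻¹' Set.Ioo 1 c) :=
      hindep.meas_iInter fun i => ⟨Set.Ioo 1 c, measurableSet_Ioo, rfl⟩
    have heach : ∀ i : Fin M, ℙ ((G i) ⁻¹' Set.Ioo 1 c) = expMeasure 1 (Set.Ioo 1 c) := by
      intro i
      rw [← Measure.map_apply (hGmeas i) measurableSet_Ioo, hdist i]
    have hSpos : ℙ (⋂ i, (G i) ⁻¹' Set.Ioo 1 c) ≠ 0 := by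
      rw [hprod]
      rw [Finset.prod_ne_zero_iff]
      intro i _
      rw [heach i]
      exact expMeasure_Ioo_ne_zero hc1
    have hTpos : ℙ T ≠ 0 := by
      intro h0
      exact hSpos (measure_mono_null hsub h0)
    exact ENNReal.toReal_pos hTpos (measure_ne_top _ _)
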